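/- There exist finite bounded lattices L₁, L₂, L₃, a bounded lattice homomorphism f : L₁ → L₂, and a function g : L₂ → L₃ preserving finite meets and admissible joins, such that the composition g ∘ f does not preserve admissible joins (i.e., there is a finite join-admissible M ⊆ L₁ with g(f(⋁M)) ≠ ⋁_{m∈M} g(f(m))). -/

import Mathlib

/-- A finite subset `M` of a bounded lattice is join-admissible if its join
distributes over all meets with elements of the lattice. -/
def JoinAdmissible {L : Type*} [Lattice L] [BoundedOrder L] (M : Finset L) : Prop :=
  ∀ a : L, a ⊓ M.sup id = M.sup fun m => a ⊓ m

/-- An a-ideal: a downward-closed subset closed under admissible joins. -/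
def IsAIdeal {L : Type*} [Lattice L] [BoundedOrder L] (A : Set L) : Prop :=
  (∀ a ∈ A, ∀ b, b ≤ a → b ∈ A) ∧
  ∀ M : Finset L, ↑M ⊆ A → JoinAdmissible M → M.sup id ∈ A

/-- The smallest a-ideal containing `T`. -/
def aIdealGen {L : Type*} [Lattice L] [BoundedOrder L] (T : Set L) : Set L :=
  ⋂₀ {A : Set L | IsAIdeal A ∧ T ⊆ A}

inductive M3 | bot | x | y | z | top
deriving DecidableEq

instance : Fintype M3 :=
  ⟨{M3.bot, M3.x, M3.y, M3.z, M3.top}, by intro a; cases a <;> decide⟩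

namespace M3

instance : LE M3 := ⟨fun a b => a = bot ∨ b = top ∨ a = b⟩
instance : DecidableRel (· ≤ · : M3 → M3 → Prop) := fun a b =>
  inferInstanceAs (Decidable (a = bot ∨ b = top ∨ a = b))

def supFn (a b : M3) : M3 := if a ≤ b then b else if b ≤ a then a else top
def infFn (a b : M3) : M3 := if a ≤ b then a else if b ≤ a then b else bot

instance : Lattice M3 where
  le := (· ≤ ·)
  le_refl := by decide
  le_trans := by decide
  le_antisymm := by decide
  sup := supFn
  le_sup_left := by decide
  le_sup_right := by decide
  sup_le := by decide
  inf := infFn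
  inf_le_left := by decide
  inf_le_right := by decide
  le_inf := by decide

instance : BoundedOrder M3 where
  top := top
  bot := bot
  le_top := by decide
  bot_le := by decide

end M3

def fFn : Bool × Bool → M3
  | (false, false) => M3.bot
  | (true, false) => M3.x
  | (false, true) => M3.y
  | (true, true) => M3.top

def gFn : M3 → Bool × Bool
  | M3.bot => (false, false)
  | M3.x => (true, false)
  | M3.y => (false, false)
  | M3.z => (false, true)
  | M3.top => (true, true)

def fHom : BoundedLatticeHom (Bool × Bool) M3 where
  toFun := fFn
  map_sup' := by decide
  map_inf' := by decide
  map_top' := by decide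
  map_bot' := by decide

def gFn' : ULift.{u} M3 → ULift.{v} (Bool × Bool) := fun a => ⟨gFn a.down⟩

def fHom' : BoundedLatticeHom (ULift.{u} (Bool × Bool)) (ULift.{v} M3) where
  toFun a := ⟨fFn a.down⟩
  map_sup' := by intro a b; cases a; cases b; exact congrArg ULift.up (fHom.map_sup' _ _)
  map_inf' := by intro a b; cases a; cases b; exact congrArg ULift.up (fHom.map_inf' _ _)
  map_top' := congrArg ULift.up fHom.map_top'
  map_bot' := congrArg ULift.up fHom.map_bot'

instance {L : Type*} [Lattice L] [BoundedOrder L] [DecidableEq L] [Fintype L]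
    (M : Finset L) : Decidable (JoinAdmissible M) :=
  inferInstanceAs (Decidable (∀ a : L, a ⊓ M.sup id = M.sup fun m => a ⊓ m))

universe u v

lemma h1 : gFn'.{u,v} ⊤ = ⊤ := by decide

lemma h2 : ∀ a b : ULift.{u} M3, gFn'.{u,v} (a ⊓ b) = gFn' a ⊓ gFn' b := by decide

lemma h3 : ∀ M : Finset (ULift.{u} M3), JoinAdmissible M →
    gFn'.{u,v} (M.sup id) = M.sup gFn' := by decide

def Mwit : Finset (ULift.{u} (Bool × Bool)) := {⟨(true, false)⟩, ⟨(false, true)⟩}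

lemma h4 : JoinAdmissible Mwit.{u} := by decide

lemma h5 : gFn'.{v,w} (fHom'.{u,v} (Mwit.{u}.sup id)) ≠ Mwit.sup fun m => gFn' (fHom' m) := by
  decide

/-- There are finite bounded lattices `L₁, L₂, L₃`, a bounded lattice homomorphism
`f : L₁ → L₂` and a map `g : L₂ → L₃` preserving finite meets and admissible joins,
whose composition `g ∘ f` does not preserve admissible joins. -/
theorem exists_composition_not_preserving_admissible_joins :
    ∃ (L₁ L₂ L₃ : BddLat), Finite ↥L₁ ∧ Finite ↥L₂ ∧ Finite ↥L₃ ∧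
      ∃ (f : BoundedLatticeHom ↥L₁ ↥L₂) (g : ↥L₂ → ↥L₃),
        g ⊤ = ⊤ ∧ (∀ a b : ↥L₂, g (a ⊓ b) = g a ⊓ g b) ∧
        (∀ M : Finset ↥L₂, JoinAdmissible M → g (M.sup id) = M.sup g) ∧
        ∃ M : Finset ↥L₁, JoinAdmissible M ∧
          g (f (M.sup id)) ≠ M.sup fun m => g (f m) := by
  refine ⟨BddLat.of (ULift (Bool × Bool)), BddLat.of (ULift M3), BddLat.of (ULift (Bool × Bool)),
    inferInstanceAs (Finite (ULift (Bool × Bool))), inferInstanceAs (Finite (ULift M3)),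
    inferInstanceAs (Finite (ULift (Bool × Bool))), fHom', gFn',
    h1, h2, h3, Mwit, h4, h5⟩
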